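/- Let H be a finite Borel measure on [0,1] satisfying the moment constraints ∫_{[0,1]} w H(dw) = 1 and ∫_{[0,1]} (1−w) H(dw) = 1, and define the Pickands dependence function A(v) = ∫_{[0,1]} max{w(1−v), (1−w)v} H(dw) for v ∈ [0,1]. Then for every v ∈ [0,1], A(v) = 1 − v + ∫₀^v H([0,w]) dw. -/

import Mathlib

open MeasureTheory Set Real Filter Topology
open scoped ENNReal

noncomputable section

theorem stmt12 (H : Measure ℝ) [IsFiniteMeasure H]
    (hsupp : H (Icc (0 : ℝ) 1)ᶜ = 0)
    (hm1 : ∫⁻ w, ENNReal.ofReal w ∂H = 1)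
    (hm2 : ∫⁻ w, ENNReal.ofReal (1 - w) ∂H = 1)
    (A : ℝ → ℝ)
    (hA : ∀ v, A v =
      (∫⁻ w, ENNReal.ofReal (max (w * (1 - v)) ((1 - w) * v)) ∂H).toReal) :
    ∀ v ∈ Icc (0 : ℝ) 1,
      A v = 1 - v + ∫ w in Icc (0 : ℝ) v, (H (Icc 0 w)).toReal := by
  intro v hv
  obtain ⟨hv0, hv1⟩ := hv
  have hae : ∀ᵐ w ∂H, w ∈ Icc (0:ℝ) 1 := by
    rw [ae_iff]
    exact measure_mono_null (fun w hw => hw) hsupp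
  -- pointwise decomposition
  have hptw : ∀ᵐ w ∂H, ENNReal.ofReal (max (w * (1 - v)) ((1 - w) * v))
      = ENNReal.ofReal w * ENNReal.ofReal (1 - v) + ENNReal.ofReal (v - w) := by
    filter_upwards [hae] with w hw
    obtain ⟨hw0, hw1⟩ := hw
    have h1 : max (w * (1 - v)) ((1 - w) * v) = w * (1 - v) + max (v - w) 0 := by
      rcases le_total v w with h | h
      · rw [max_eq_left (by nlinarith), max_eq_right (by linarith)]; ring
      · rw [max_eq_right (by nlinarith), max_eq_left (by linarith)]; ring
    have h2 : ENNReal.ofReal (max (v - w) 0) = ENNReal.ofReal (v - w) := by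
      rcases le_total (v - w) 0 with h | h
      · rw [max_eq_right h, ENNReal.ofReal_zero, ENNReal.ofReal_eq_zero.2 h]
      · rw [max_eq_left h]
    rw [h1, ENNReal.ofReal_add (mul_nonneg hw0 (by linarith)) (le_max_right _ _),
      ENNReal.ofReal_mul hw0, h2]
  -- the key lintegral identity
  have hswap : (∫⁻ w, ENNReal.ofReal (v - w) ∂H)
      = ∫⁻ u in Icc (0:ℝ) v, H (Icc 0 u) := by
    have hstep1 : (∫⁻ w, ENNReal.ofReal (v - w) ∂H)
        = ∫⁻ w, ∫⁻ u in Icc (0:ℝ) v, ({p : ℝ × ℝ | p.1 ≤ p.2}.indicator 1 (w, u)) ∂volume ∂H := by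
      refine lintegral_congr_ae ?_
      filter_upwards [hae] with w hw
      obtain ⟨hw0, hw1⟩ := hw
      have : (fun u => ({p : ℝ × ℝ | p.1 ≤ p.2}.indicator 1 (w, u) : ℝ≥0∞))
          = (Ici w).indicator 1 := by
        ext u
        simp [Set.indicator_apply, Set.mem_Ici]
      rw [this, lintegral_indicator_one measurableSet_Ici,
        Measure.restrict_apply measurableSet_Ici]
      have : Ici w ∩ Icc 0 v = Icc w v := by
        ext u; simp only [mem_inter_iff, mem_Ici, mem_Icc]
        constructor
        · rintro ⟨h1, h2, h3⟩; exact ⟨h1, h3⟩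
        · rintro ⟨h1, h2⟩; exact ⟨h1, le_trans hw0 h1, h2⟩
      rw [this, Real.volume_Icc]
    rw [hstep1]
    rw [lintegral_lintegral_swap]
    · have : ∀ u ∈ Icc (0:ℝ) v,
          (∫⁻ w, ({p : ℝ × ℝ | p.1 ≤ p.2}.indicator 1 (w, u) : ℝ≥0∞) ∂H) = H (Icc 0 u) := by
        intro u hu
        have he : (fun w => ({p : ℝ × ℝ | p.1 ≤ p.2}.indicator 1 (w, u) : ℝ≥0∞))
            = (Iic u).indicator 1 := by
          ext w; simp [Set.indicator_apply, Set.mem_Iic]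
        rw [he, lintegral_indicator_one measurableSet_Iic]
        -- H (Iic u) = H (Icc 0 u)
        have hsub : Iic u ⊆ Icc 0 u ∪ Iio (0:ℝ) := by
          intro w hw
          rcases le_or_gt 0 w with h | h
          · exact Or.inl ⟨h, hw⟩
          · exact Or.inr h
        refine le_antisymm ?_ (measure_mono Icc_subset_Iic_self)
        have hz : H (Iio (0:ℝ)) = 0 := by
          refine measure_mono_null ?_ hsupp
          intro w hw hmem
          exact absurd hmem.1 (not_le.2 hw)
        calc H (Iic u) ≤ H (Icc 0 u ∪ Iio 0) := measure_mono hsub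
          _ ≤ H (Icc 0 u) + H (Iio 0) := measure_union_le _ _
          _ = H (Icc 0 u) := by rw [hz, add_zero]
      exact setLIntegral_congr_fun measurableSet_Icc this
    · exact (measurable_one.indicator
        (measurableSet_le measurable_fst measurable_snd)).aemeasurable
  -- finiteness of the key integral
  have hfin : (∫⁻ u in Icc (0:ℝ) v, H (Icc 0 u)) ≠ ∞ := by
    have : (∫⁻ u in Icc (0:ℝ) v, H (Icc 0 u)) ≤ ∫⁻ _ in Icc (0:ℝ) v, H univ := by
      exact lintegral_mono fun u => measure_mono (subset_univ _)
    refine ne_top_of_le_ne_top ?_ this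
    rw [setLIntegral_const]
    exact ENNReal.mul_ne_top (measure_ne_top H _) (by simp [Real.volume_Icc])
  -- measurability of u ↦ H (Icc 0 u)
  have hmono : Monotone (fun u => H (Icc (0:ℝ) u)) :=
    fun a b hab => measure_mono (Icc_subset_Icc_right hab)
  -- combine
  rw [hA v, lintegral_congr_ae hptw, lintegral_add_right _ (by fun_prop),
    lintegral_mul_const _ (by fun_prop), hm1, one_mul, hswap]
  rw [ENNReal.toReal_add (by simp) hfin, ENNReal.toReal_ofReal (by linarith)]
  congr 1
  rw [integral_toReal]
  · exact hmono.measurable.aemeasurable.restrict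
  · exact Filter.Eventually.of_forall fun u => measure_lt_top H _
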